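/- Let F be an abelian subgroup of G = PU(n) ⋊ ⟨τ₀⟩ not contained in PU(n), let H_F = F ∩ PU(n) with commutator pairing m and ker m = {x ∈ H_F : m(x,y) = 1 for all y ∈ H_F}, and let π : U(n) → PU(n) be the projection. Fix u = ([C], τ₀) ∈ F \ PU(n) with C ∈ U(n). Then: (i) for every A ∈ π⁻¹(ker m) there is a unique ν(A) ∈ U(1) with C·Ā·C⁻¹ = ν(A)·A, the resulting map ν : π⁻¹(ker m) → U(1) is a group homomorphism, and it does not depend on the choice of u ∈ F \ PU(n); (ii) π restricts to a group isomorphism from ker ν/⟨−I_n⟩ onto ker m. -/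

import Mathlib

open Matrix

noncomputable section

/-- The unitary group `U(ι)` of complex unitary matrices indexed by `ι`. -/
abbrev UG (ι : Type) [Fintype ι] [DecidableEq ι] := Matrix.unitaryGroup ι ℂ

variable (ι : Type) [Fintype ι] [DecidableEq ι]

/-- The central subgroup `Z_n = {λ I : |λ| = 1}` of scalar unitary matrices. -/
def scalarSG : Subgroup (UG ι) where
  carrier := {A | ∃ c : ℂ, ‖c‖ = 1 ∧ (A : Matrix ι ι ℂ) = c • (1 : Matrix ι ι ℂ)}
  one_mem' := ⟨1, by simp, by simp⟩
  mul_mem' := by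
    rintro A B ⟨a, ha, hA⟩ ⟨b, hb, hB⟩
    exact ⟨a * b, by simp [ha, hb], by
      simp only [Matrix.UnitaryGroup.mul_val, hA, hB, smul_mul_smul_comm, mul_one]⟩
  inv_mem' := by
    rintro A ⟨a, ha, hA⟩
    refine ⟨star a, by simpa using ha, ?_⟩
    have : ((A⁻¹ : UG ι) : Matrix ι ι ℂ) = star (A : Matrix ι ι ℂ) :=
      Matrix.UnitaryGroup.inv_val A
    rw [this, hA]
    simp [Matrix.star_eq_conjTranspose, Matrix.conjTranspose_smul]

instance scalarSG_normal : (scalarSG ι).Normal := by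
  constructor
  rintro A ⟨a, ha, hA⟩ g
  refine ⟨a, ha, ?_⟩
  have h1 : ((g * A * g⁻¹ : UG ι) : Matrix ι ι ℂ)
      = (g : Matrix ι ι ℂ) * (A : Matrix ι ι ℂ) * ((g⁻¹ : UG ι) : Matrix ι ι ℂ) := rfl
  rw [h1, hA]
  have h2 : (g : Matrix ι ι ℂ) * ((g⁻¹ : UG ι) : Matrix ι ι ℂ) = 1 := by
    have := Matrix.UnitaryGroup.mul_val g g⁻¹
    rw [mul_inv_cancel] at this
    simpa using this.symm
  calc (g : Matrix ι ι ℂ) * (a • (1 : Matrix ι ι ℂ)) * ((g⁻¹ : UG ι) : Matrix ι ι ℂ)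
      = a • ((g : Matrix ι ι ℂ) * ((g⁻¹ : UG ι) : Matrix ι ι ℂ)) := by
        simp [mul_smul_comm, smul_mul_assoc]
    _ = a • (1 : Matrix ι ι ℂ) := by rw [h2]

/-- The projective unitary group `PU(ι) = U(ι)/Z`. -/
abbrev PU := UG ι ⧸ scalarSG ι

variable {ι}

lemma conjTranspose_map_conj (A : Matrix ι ι ℂ) :
    (A.map (starRingEnd ℂ))ᴴ = Aᵀ := by
  ext i j
  simp [Matrix.conjTranspose_apply, Matrix.map_apply]

/-- Entrywise complex conjugation on the unitary group. -/
def conjUG (A : UG ι) : UG ι :=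
  ⟨(A : Matrix ι ι ℂ).map (starRingEnd ℂ), by
    rw [Matrix.mem_unitaryGroup_iff]
    have h1 : ((A : Matrix ι ι ℂ) * star (A : Matrix ι ι ℂ)).map (starRingEnd ℂ)
        = (A : Matrix ι ι ℂ).map (starRingEnd ℂ)
          * (star (A : Matrix ι ι ℂ)).map (starRingEnd ℂ) :=
      Matrix.map_mul
    have hA : (A : Matrix ι ι ℂ) * star (A : Matrix ι ι ℂ) = 1 :=
      Matrix.mem_unitaryGroup_iff.mp A.2
    rw [hA] at h1
    have h2 : ((1 : Matrix ι ι ℂ)).map (starRingEnd ℂ) = 1 := by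
      ext i j; simp [Matrix.map_apply, Matrix.one_apply, apply_ite]
    have h3 : star ((A : Matrix ι ι ℂ).map (starRingEnd ℂ))
        = (star (A : Matrix ι ι ℂ)).map (starRingEnd ℂ) := by
      ext i j
      simp [Matrix.star_eq_conjTranspose, Matrix.conjTranspose_apply, Matrix.map_apply]
    rw [h3, ← h1, h2]⟩

@[simp] lemma conjUG_conjUG (A : UG ι) : conjUG (conjUG A) = A := by
  apply Subtype.ext
  show ((A : Matrix ι ι ℂ).map (starRingEnd ℂ)).map (starRingEnd ℂ) = (A : Matrix ι ι ℂ)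
  ext i j
  simp [Matrix.map_apply]

/-- Entrywise complex conjugation as an automorphism of the unitary group. -/
def conjUGE : UG ι ≃* UG ι where
  toFun := conjUG
  invFun := conjUG
  left_inv := conjUG_conjUG
  right_inv := conjUG_conjUG
  map_mul' A B := by
    apply Subtype.ext
    show ((A * B : UG ι) : Matrix ι ι ℂ).map (starRingEnd ℂ)
        = (A : Matrix ι ι ℂ).map (starRingEnd ℂ) * (B : Matrix ι ι ℂ).map (starRingEnd ℂ)
    rw [Matrix.UnitaryGroup.mul_val]
    exact Matrix.map_mul

variable (ι)

lemma scalarSG_le_comap_conjUGE :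
    scalarSG ι ≤ (scalarSG ι).comap (conjUGE : UG ι ≃* UG ι).toMonoidHom := by
  rintro A ⟨a, ha, hA⟩
  refine ⟨starRingEnd ℂ a, by simpa using ha, ?_⟩
  show ((A : Matrix ι ι ℂ).map (starRingEnd ℂ)) = _
  rw [hA]
  ext i j
  by_cases h : i = j <;>
    simp [Matrix.map_apply, Matrix.smul_apply, Matrix.one_apply, h]

/-- The complex conjugation automorphism `τ₀` of `PU(ι)`. -/
def tauPU : PU ι ≃* PU ι where
  toFun := QuotientGroup.map (scalarSG ι) (scalarSG ι) (conjUGE : UG ι ≃* UG ι).toMonoidHom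
    (scalarSG_le_comap_conjUGE ι)
  invFun := QuotientGroup.map (scalarSG ι) (scalarSG ι) (conjUGE : UG ι ≃* UG ι).toMonoidHom
    (scalarSG_le_comap_conjUGE ι)
  left_inv := by
    intro x
    induction x using QuotientGroup.induction_on with
    | H A => rw [QuotientGroup.map_mk, QuotientGroup.map_mk]
             exact congrArg _ (conjUG_conjUG A)
  right_inv := by
    intro x
    induction x using QuotientGroup.induction_on with
    | H A => rw [QuotientGroup.map_mk, QuotientGroup.map_mk]
             exact congrArg _ (conjUG_conjUG A)
  map_mul' := map_mul _


end

noncomputable section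

variable (ι : Type) [Fintype ι] [DecidableEq ι]

lemma tauPU_mul_tauPU : (tauPU ι) * (tauPU ι) = 1 :=
  DFunLike.ext _ _ fun x => by
    rw [MulAut.mul_apply, MulAut.one_apply]
    exact (tauPU ι).left_inv x

/-- The action of `⟨τ₀⟩ ≅ ℤ/2ℤ` on `PU(ι)` by complex conjugation. -/
def actPU : Multiplicative (ZMod 2) →* MulAut (PU ι) where
  toFun x := (tauPU ι) ^ (Multiplicative.toAdd x).val
  map_one' := by
    show (tauPU ι) ^ (Multiplicative.toAdd (1 : Multiplicative (ZMod 2))).val = 1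
    simp
  map_mul' a b := by
    show (tauPU ι) ^ (Multiplicative.toAdd (a * b)).val
        = (tauPU ι) ^ (Multiplicative.toAdd a).val * (tauPU ι) ^ (Multiplicative.toAdd b).val
    have h2 : (tauPU ι) ^ 2 = 1 := by rw [pow_two]; exact tauPU_mul_tauPU ι
    have hab : (Multiplicative.toAdd (a * b))
        = Multiplicative.toAdd a + Multiplicative.toAdd b := rfl
    rw [hab, ZMod.val_add, ← pow_eq_pow_mod _ h2, pow_add]

/-- The group `PU(ι) ⋊ ⟨τ₀⟩`. -/
abbrev GA := SemidirectProduct (PU ι) (Multiplicative (ZMod 2)) (actPU ι)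

end

/-- `x ∈ ker m` for the commutator pairing `m` on `H_F = F ∩ PU(n)`. -/
def inKerm (n : ℕ) (F : Subgroup (GA (Fin n))) (x : PU (Fin n)) : Prop :=
  SemidirectProduct.inl x ∈ F ∧
  ∀ y : PU (Fin n), SemidirectProduct.inl y ∈ F →
    ∀ A B : UG (Fin n), (QuotientGroup.mk A : PU (Fin n)) = x →
      (QuotientGroup.mk B : PU (Fin n)) = y →
      ((A * B * A⁻¹ * B⁻¹ : UG (Fin n)) : Matrix (Fin n) (Fin n) ℂ)
        = (1 : Matrix (Fin n) (Fin n) ℂ)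


section Aux

lemma mul_star_self_of_norm_one {c : ℂ} (hc : ‖c‖ = 1) : c * star c = 1 := by
  rw [Complex.star_def, Complex.mul_conj, Complex.normSq_eq_norm_sq, hc]
  norm_num

lemma star_mul_self_of_norm_one {c : ℂ} (hc : ‖c‖ = 1) : star c * c = 1 := by
  rw [mul_comm]; exact mul_star_self_of_norm_one hc

lemma map_conj_smul {n : ℕ} (c : ℂ) (M : Matrix (Fin n) (Fin n) ℂ) :
    (c • M).map (starRingEnd ℂ) = star c • M.map (starRingEnd ℂ) := by
  ext i j
  simp [Matrix.map_apply, Matrix.smul_apply]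

lemma smul_one_mem_unitary {n : ℕ} {c : ℂ} (hc : ‖c‖ = 1) :
    (c • (1 : Matrix (Fin n) (Fin n) ℂ)) ∈ Matrix.unitaryGroup (Fin n) ℂ := by
  rw [Matrix.mem_unitaryGroup_iff]
  rw [star_smul, star_one, smul_mul_smul_comm, one_mul,
    mul_star_self_of_norm_one hc, one_smul]

end Aux

/-- For an abelian subgroup `F` of `G = PU(n) ⋊ ⟨τ₀⟩` not contained in
`PU(n)` and a fixed `u = ([C], τ₀) ∈ F \ PU(n)`: (i) there is a homomorphism
`ν : π⁻¹(ker m) → U(1)` with `C Ā C⁻¹ = ν(A) A`, independent of the choice of `u`;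
(ii) `π` restricts to an isomorphism `ker ν / ⟨-I⟩ ≅ ker m`. -/
theorem twisted_nu_homomorphism (n : ℕ) (hn : 1 ≤ n)
    (F : Subgroup (GA (Fin n)))
    (habel : ∀ x ∈ F, ∀ y ∈ F, x * y = y * x)
    (u : GA (Fin n)) (hu : u ∈ F) (hur : u.right ≠ 1)
    (C : UG (Fin n)) (hC : (QuotientGroup.mk C : PU (Fin n)) = u.left) :
    ∃ ν : UG (Fin n) → ℂ,
      (∀ A : UG (Fin n), inKerm n F (QuotientGroup.mk A) →
        ‖ν A‖ = 1 ∧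
        (C : Matrix (Fin n) (Fin n) ℂ)
            * ((A : Matrix (Fin n) (Fin n) ℂ).map (starRingEnd ℂ))
            * (C : Matrix (Fin n) (Fin n) ℂ)⁻¹
          = ν A • (A : Matrix (Fin n) (Fin n) ℂ)) ∧
      (∀ A : UG (Fin n), inKerm n F (QuotientGroup.mk A) → ∀ lam : ℂ,
        (C : Matrix (Fin n) (Fin n) ℂ)
            * ((A : Matrix (Fin n) (Fin n) ℂ).map (starRingEnd ℂ))
            * (C : Matrix (Fin n) (Fin n) ℂ)⁻¹
          = lam • (A : Matrix (Fin n) (Fin n) ℂ) → lam = ν A) ∧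
      (∀ A B : UG (Fin n), inKerm n F (QuotientGroup.mk A) →
        inKerm n F (QuotientGroup.mk B) → ν (A * B) = ν A * ν B) ∧
      (∀ u' ∈ F, u'.right ≠ (1 : Multiplicative (ZMod 2)) →
        ∀ C' : UG (Fin n), (QuotientGroup.mk C' : PU (Fin n)) = u'.left →
        ∀ A : UG (Fin n), inKerm n F (QuotientGroup.mk A) →
          (C' : Matrix (Fin n) (Fin n) ℂ)
              * ((A : Matrix (Fin n) (Fin n) ℂ).map (starRingEnd ℂ))
              * (C' : Matrix (Fin n) (Fin n) ℂ)⁻¹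
            = ν A • (A : Matrix (Fin n) (Fin n) ℂ)) ∧
      (∀ x : PU (Fin n), inKerm n F x →
        ∃ A : UG (Fin n), (QuotientGroup.mk A : PU (Fin n)) = x ∧ ν A = 1) ∧
      (∀ A B : UG (Fin n), inKerm n F (QuotientGroup.mk A) →
        inKerm n F (QuotientGroup.mk B) → ν A = 1 → ν B = 1 →
        (QuotientGroup.mk A : PU (Fin n)) = QuotientGroup.mk B →
        (A = B ∨ (A : Matrix (Fin n) (Fin n) ℂ) = -(B : Matrix (Fin n) (Fin n) ℂ))) := by
  classical
  have hCC : (C : Matrix (Fin n) (Fin n) ℂ) * star (C : Matrix (Fin n) (Fin n) ℂ) = 1 :=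
    Matrix.mem_unitaryGroup_iff.mp C.2
  have hCinv : (C : Matrix (Fin n) (Fin n) ℂ)⁻¹ = star (C : Matrix (Fin n) (Fin n) ℂ) :=
    Matrix.inv_eq_right_inv hCC
  have hCC' : star (C : Matrix (Fin n) (Fin n) ℂ) * (C : Matrix (Fin n) (Fin n) ℂ) = 1 :=
    Matrix.mem_unitaryGroup_iff'.mp C.2
  -- uniqueness of scalars
  have huniq : ∀ (A : UG (Fin n)) (lam mu : ℂ),
      lam • (A : Matrix (Fin n) (Fin n) ℂ) = mu • (A : Matrix (Fin n) (Fin n) ℂ) → lam = mu := by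
    intro A lam mu h
    have hAA : (A : Matrix (Fin n) (Fin n) ℂ) * star (A : Matrix (Fin n) (Fin n) ℂ) = 1 :=
      Matrix.mem_unitaryGroup_iff.mp A.2
    have h2 := congrArg (fun M => M * star (A : Matrix (Fin n) (Fin n) ℂ)) h
    simp only [smul_mul_assoc, hAA] at h2
    have h3 := congrFun (congrFun h2 ⟨0, hn⟩) ⟨0, hn⟩
    simpa [Matrix.smul_apply, Matrix.one_apply_eq] using h3
  -- the action is tauPU
  have hact : ∀ r : Multiplicative (ZMod 2), r ≠ 1 → actPU (Fin n) r = tauPU (Fin n) := by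
    intro r hr
    have hr1 : r = Multiplicative.ofAdd 1 := by
      revert hr
      have : ∀ x : Multiplicative (ZMod 2), x ≠ 1 → x = Multiplicative.ofAdd 1 := by decide
      exact this r
    rw [hr1]
    show (tauPU (Fin n)) ^ (Multiplicative.toAdd (Multiplicative.ofAdd (1 : ZMod 2))).val
        = tauPU (Fin n)
    have h1 : (Multiplicative.toAdd (Multiplicative.ofAdd (1 : ZMod 2))).val = 1 := rfl
    rw [h1, pow_one]
  have htau : ∀ B : UG (Fin n),
      (tauPU (Fin n)) (QuotientGroup.mk B) = QuotientGroup.mk (conjUG B) := by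
    intro B
    show QuotientGroup.map (scalarSG (Fin n)) (scalarSG (Fin n))
      (conjUGE : UG (Fin n) ≃* UG (Fin n)).toMonoidHom
      (scalarSG_le_comap_conjUGE (Fin n)) (QuotientGroup.mk B) = _
    rw [QuotientGroup.map_mk]
    rfl
  -- existence of the scalar
  have hex : ∀ A : UG (Fin n),
      SemidirectProduct.inl (QuotientGroup.mk A : PU (Fin n)) ∈ F →
      ∃ lam : ℂ, ‖lam‖ = 1 ∧
        (C : Matrix (Fin n) (Fin n) ℂ)
            * ((A : Matrix (Fin n) (Fin n) ℂ).map (starRingEnd ℂ))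
            * (C : Matrix (Fin n) (Fin n) ℂ)⁻¹
          = lam • (A : Matrix (Fin n) (Fin n) ℂ) := by
    intro A hA
    have hcomm := habel u hu _ hA
    have hl := congrArg SemidirectProduct.left hcomm
    rw [SemidirectProduct.mul_left, SemidirectProduct.mul_left, SemidirectProduct.left_inl,
      SemidirectProduct.right_inl, _root_.map_one, MulAut.one_apply] at hl
    rw [hact u.right hur, htau, ← hC, ← QuotientGroup.mk_mul, ← QuotientGroup.mk_mul] at hl
    obtain ⟨c, hc1, hc2⟩ := QuotientGroup.eq.mp hl
    have hgrp : (C * conjUG A) * ((C * conjUG A)⁻¹ * (A * C)) = A * C := by group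
    have hmat : ((C * conjUG A : UG (Fin n)) : Matrix (Fin n) (Fin n) ℂ)
        * (c • (1 : Matrix (Fin n) (Fin n) ℂ))
        = ((A * C : UG (Fin n)) : Matrix (Fin n) (Fin n) ℂ) := by
      rw [← hc2]
      exact congrArg Subtype.val hgrp
    rw [Matrix.UnitaryGroup.mul_val, Matrix.UnitaryGroup.mul_val, mul_smul_comm, mul_one] at hmat
    have hcol : (C : Matrix (Fin n) (Fin n) ℂ)
        * ((A : Matrix (Fin n) (Fin n) ℂ).map (starRingEnd ℂ))
        = star c • ((A : Matrix (Fin n) (Fin n) ℂ) * (C : Matrix (Fin n) (Fin n) ℂ)) := by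
      rw [← hmat, smul_smul, star_mul_self_of_norm_one hc1, one_smul]
      rfl
    refine ⟨star c, by simpa using hc1, ?_⟩
    rw [hCinv, hcol, smul_mul_assoc, mul_assoc, hCC, mul_one]
  -- definition of ν
  set P : UG (Fin n) → ℂ → Prop := fun A lam => ‖lam‖ = 1 ∧
    (C : Matrix (Fin n) (Fin n) ℂ)
        * ((A : Matrix (Fin n) (Fin n) ℂ).map (starRingEnd ℂ))
        * (C : Matrix (Fin n) (Fin n) ℂ)⁻¹
      = lam • (A : Matrix (Fin n) (Fin n) ℂ) with hP
  set ν : UG (Fin n) → ℂ := fun A => if h : ∃ lam, P A lam then h.choose else 1 with hν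
  have hspec : ∀ A : UG (Fin n), (∃ lam, P A lam) → P A (ν A) := by
    intro A hexA
    simp only [hν, dif_pos hexA]
    exact hexA.choose_spec
  have hν_eq : ∀ (A : UG (Fin n)) (lam : ℂ), P A lam → ν A = lam := by
    intro A lam h
    have hexA : ∃ l, P A l := ⟨lam, h⟩
    exact huniq A (ν A) lam (((hspec A hexA).2.symm).trans h.2)
  have hexk : ∀ A : UG (Fin n), inKerm n F (QuotientGroup.mk A) → ∃ lam, P A lam :=
    fun A hA => hex A hA.1
  refine ⟨ν, fun A hA => hspec A (hexk A hA), ?_, ?_, ?_, ?_, ?_⟩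
  · -- uniqueness clause
    intro A hA lam heq
    exact huniq A lam (ν A) (heq.symm.trans (hspec A (hexk A hA)).2)
  · -- homomorphism
    intro A B hA hB
    have hPA := hspec A (hexk A hA)
    have hPB := hspec B (hexk B hB)
    refine hν_eq (A * B) (ν A * ν B) ⟨by rw [norm_mul, hPA.1, hPB.1, mul_one], ?_⟩
    have hmul : ((A * B : UG (Fin n)) : Matrix (Fin n) (Fin n) ℂ)
        = (A : Matrix (Fin n) (Fin n) ℂ) * (B : Matrix (Fin n) (Fin n) ℂ) := rfl
    rw [hmul, Matrix.map_mul]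
    have key : (C : Matrix (Fin n) (Fin n) ℂ)
        * ((A : Matrix (Fin n) (Fin n) ℂ).map (starRingEnd ℂ)
            * (B : Matrix (Fin n) (Fin n) ℂ).map (starRingEnd ℂ))
        * (C : Matrix (Fin n) (Fin n) ℂ)⁻¹
        = ((C : Matrix (Fin n) (Fin n) ℂ)
            * ((A : Matrix (Fin n) (Fin n) ℂ).map (starRingEnd ℂ))
            * (C : Matrix (Fin n) (Fin n) ℂ)⁻¹)
          * ((C : Matrix (Fin n) (Fin n) ℂ)
            * ((B : Matrix (Fin n) (Fin n) ℂ).map (starRingEnd ℂ))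
            * (C : Matrix (Fin n) (Fin n) ℂ)⁻¹) := by
      rw [hCinv]
      calc (C : Matrix (Fin n) (Fin n) ℂ)
            * ((A : Matrix (Fin n) (Fin n) ℂ).map (starRingEnd ℂ)
                * (B : Matrix (Fin n) (Fin n) ℂ).map (starRingEnd ℂ))
            * star (C : Matrix (Fin n) (Fin n) ℂ)
          = (C : Matrix (Fin n) (Fin n) ℂ)
            * ((A : Matrix (Fin n) (Fin n) ℂ).map (starRingEnd ℂ)
                * ((star (C : Matrix (Fin n) (Fin n) ℂ) * (C : Matrix (Fin n) (Fin n) ℂ))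
                  * ((B : Matrix (Fin n) (Fin n) ℂ).map (starRingEnd ℂ)
                    * star (C : Matrix (Fin n) (Fin n) ℂ)))) := by
            rw [hCC']; simp only [one_mul, mul_assoc]
        _ = _ := by simp only [mul_assoc]
    rw [key, hPA.2, hPB.2, smul_mul_smul_comm]
  · -- independence of the choice of u
    intro u' hu'F hur' C' hC' A hA
    have hPA := hspec A (hexk A hA)
    have hhF : u⁻¹ * u' ∈ F := F.mul_mem (F.inv_mem hu) hu'F
    have hhr : (u⁻¹ * u').right = 1 := by
      have key : ∀ x y : Multiplicative (ZMod 2), x ≠ 1 → y ≠ 1 → x⁻¹ * y = 1 := by decide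
      exact key u.right u'.right hur hur'
    have hinl : u⁻¹ * u' = SemidirectProduct.inl (u⁻¹ * u').left := by
      cases h : u⁻¹ * u'
      refine SemidirectProduct.ext rfl ?_
      rw [← h, hhr]; rfl
    have hlF : SemidirectProduct.inl (u⁻¹ * u').left ∈ F := hinl ▸ hhF
    obtain ⟨D, hD⟩ := QuotientGroup.mk_surjective (u⁻¹ * u').left
    -- A and D commute (strictly)
    have h1 := hA.2 (u⁻¹ * u').left hlF A D rfl hD
    have h2 : (A * D * A⁻¹ * D⁻¹ : UG (Fin n)) = 1 := Subtype.ext h1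
    have h3 : A * D = D * A := by
      have := congrArg (fun x => x * D * A) h2
      simpa [mul_assoc] using this
    have hcomm : (A : Matrix (Fin n) (Fin n) ℂ) * (D : Matrix (Fin n) (Fin n) ℂ)
        = (D : Matrix (Fin n) (Fin n) ℂ) * (A : Matrix (Fin n) (Fin n) ℂ) :=
      congrArg Subtype.val h3
    have hcomc : (D : Matrix (Fin n) (Fin n) ℂ).map (starRingEnd ℂ)
          * (A : Matrix (Fin n) (Fin n) ℂ).map (starRingEnd ℂ)
        = (A : Matrix (Fin n) (Fin n) ℂ).map (starRingEnd ℂ)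
          * (D : Matrix (Fin n) (Fin n) ℂ).map (starRingEnd ℂ) := by
      have := congrArg (fun M => M.map (starRingEnd ℂ)) hcomm
      simp only [Matrix.map_mul] at this
      exact this.symm
    -- relate C' to C * conj D
    have hu'eq : u' = u * (u⁻¹ * u') := by group
    have hleft : u'.left = u.left * (tauPU (Fin n)) (u⁻¹ * u').left := by
      conv_lhs => rw [hu'eq]
      rw [SemidirectProduct.mul_left, hact u.right hur]
    have hC'2 : (QuotientGroup.mk C' : PU (Fin n)) = QuotientGroup.mk (C * conjUG D) := by
      rw [hC', hleft, ← hC, ← hD, htau, ← QuotientGroup.mk_mul]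
    obtain ⟨c, hc1, hc2⟩ := QuotientGroup.eq.mp hC'2
    have hgrp : C' * (C'⁻¹ * (C * conjUG D)) = C * conjUG D := by group
    have hmat : ((C' : UG (Fin n)) : Matrix (Fin n) (Fin n) ℂ)
        * (c • (1 : Matrix (Fin n) (Fin n) ℂ))
        = ((C * conjUG D : UG (Fin n)) : Matrix (Fin n) (Fin n) ℂ) := by
      rw [← hc2]
      exact congrArg Subtype.val hgrp
    rw [mul_smul_comm, mul_one] at hmat
    have hC'eq : (C' : Matrix (Fin n) (Fin n) ℂ)
        = star c • ((C : Matrix (Fin n) (Fin n) ℂ)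
            * (D : Matrix (Fin n) (Fin n) ℂ).map (starRingEnd ℂ)) := by
      rw [← (show ((C * conjUG D : UG (Fin n)) : Matrix (Fin n) (Fin n) ℂ)
          = (C : Matrix (Fin n) (Fin n) ℂ)
            * (D : Matrix (Fin n) (Fin n) ℂ).map (starRingEnd ℂ) from rfl), ← hmat,
        smul_smul, star_mul_self_of_norm_one hc1, one_smul]
    have hC'C' : (C' : Matrix (Fin n) (Fin n) ℂ) * star (C' : Matrix (Fin n) (Fin n) ℂ) = 1 :=
      Matrix.mem_unitaryGroup_iff.mp C'.2
    have hC'inv : (C' : Matrix (Fin n) (Fin n) ℂ)⁻¹ = star (C' : Matrix (Fin n) (Fin n) ℂ) :=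
      Matrix.inv_eq_right_inv hC'C'
    have hC'star : star (C' : Matrix (Fin n) (Fin n) ℂ)
        = c • (star ((D : Matrix (Fin n) (Fin n) ℂ).map (starRingEnd ℂ))
            * star (C : Matrix (Fin n) (Fin n) ℂ)) := by
      rw [hC'eq, star_smul, star_star, Matrix.star_mul]
    have hDunit : (D : Matrix (Fin n) (Fin n) ℂ).map (starRingEnd ℂ)
        * star ((D : Matrix (Fin n) (Fin n) ℂ).map (starRingEnd ℂ)) = 1 :=
      Matrix.mem_unitaryGroup_iff.mp (conjUG D).2
    rw [hC'inv, hC'star, hC'eq]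
    rw [smul_mul_assoc, smul_mul_assoc, mul_smul_comm, smul_smul,
      star_mul_self_of_norm_one hc1, one_smul]
    calc (C : Matrix (Fin n) (Fin n) ℂ)
          * (D : Matrix (Fin n) (Fin n) ℂ).map (starRingEnd ℂ)
          * (A : Matrix (Fin n) (Fin n) ℂ).map (starRingEnd ℂ)
          * (star ((D : Matrix (Fin n) (Fin n) ℂ).map (starRingEnd ℂ))
            * star (C : Matrix (Fin n) (Fin n) ℂ))
        = (C : Matrix (Fin n) (Fin n) ℂ)
          * (((D : Matrix (Fin n) (Fin n) ℂ).map (starRingEnd ℂ)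
              * (A : Matrix (Fin n) (Fin n) ℂ).map (starRingEnd ℂ))
            * star ((D : Matrix (Fin n) (Fin n) ℂ).map (starRingEnd ℂ)))
          * star (C : Matrix (Fin n) (Fin n) ℂ) := by
          simp only [mul_assoc]
      _ = (C : Matrix (Fin n) (Fin n) ℂ)
          * ((A : Matrix (Fin n) (Fin n) ℂ).map (starRingEnd ℂ)
            * ((D : Matrix (Fin n) (Fin n) ℂ).map (starRingEnd ℂ)
              * star ((D : Matrix (Fin n) (Fin n) ℂ).map (starRingEnd ℂ))))
          * star (C : Matrix (Fin n) (Fin n) ℂ) := by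
          rw [hcomc]; simp only [mul_assoc]
      _ = (C : Matrix (Fin n) (Fin n) ℂ)
          * ((A : Matrix (Fin n) (Fin n) ℂ).map (starRingEnd ℂ))
          * star (C : Matrix (Fin n) (Fin n) ℂ) := by rw [hDunit, mul_one, mul_assoc]
      _ = ν A • (A : Matrix (Fin n) (Fin n) ℂ) := by rw [← hCinv]; exact hPA.2
  · -- surjectivity onto ker m
    intro x hx
    obtain ⟨A₀, hA₀⟩ := QuotientGroup.mk_surjective x
    have hkA₀ : inKerm n F (QuotientGroup.mk A₀) := hA₀.symm ▸ hx
    have hPA₀ := hspec A₀ (hexk A₀ hkA₀)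
    obtain ⟨c, hc⟩ := IsAlgClosed.exists_pow_nat_eq (ν A₀) zero_lt_two
    have hcn : ‖c‖ = 1 := by
      have h2 : ‖c‖ ^ 2 = 1 := by rw [← norm_pow, hc, hPA₀.1]
      nlinarith [norm_nonneg c]
    set z : UG (Fin n) := ⟨c • (1 : Matrix (Fin n) (Fin n) ℂ), smul_one_mem_unitary hcn⟩
      with hz
    refine ⟨z * A₀, ?_, ?_⟩
    · have hzmem : z ∈ scalarSG (Fin n) := ⟨c, hcn, rfl⟩
      rw [QuotientGroup.mk_mul, (QuotientGroup.eq_one_iff z).mpr hzmem, one_mul, hA₀]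
    · refine hν_eq (z * A₀) 1 ⟨by simp, ?_⟩
      have hmul : ((z * A₀ : UG (Fin n)) : Matrix (Fin n) (Fin n) ℂ)
          = c • (A₀ : Matrix (Fin n) (Fin n) ℂ) := by
        show (c • (1 : Matrix (Fin n) (Fin n) ℂ)) * (A₀ : Matrix (Fin n) (Fin n) ℂ) = _
        rw [smul_mul_assoc, one_mul]
      have hP2 : (C : Matrix (Fin n) (Fin n) ℂ)
          * ((A₀ : Matrix (Fin n) (Fin n) ℂ).map (starRingEnd ℂ))
          * (C : Matrix (Fin n) (Fin n) ℂ)⁻¹ = ν A₀ • (A₀ : Matrix (Fin n) (Fin n) ℂ) :=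
        hPA₀.2
      rw [hmul, map_conj_smul, mul_smul_comm, smul_mul_assoc, hP2, smul_smul, one_smul, ← hc]
      congr 1
      rw [pow_two, ← mul_assoc, star_mul_self_of_norm_one hcn, one_mul]
  · -- injectivity up to sign
    intro A B hA hB hνA hνB hmk
    have hPA : (C : Matrix (Fin n) (Fin n) ℂ)
        * ((A : Matrix (Fin n) (Fin n) ℂ).map (starRingEnd ℂ))
        * (C : Matrix (Fin n) (Fin n) ℂ)⁻¹ = ν A • (A : Matrix (Fin n) (Fin n) ℂ) :=
      (hspec A (hexk A hA)).2
    have hPB : (C : Matrix (Fin n) (Fin n) ℂ)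
        * ((B : Matrix (Fin n) (Fin n) ℂ).map (starRingEnd ℂ))
        * (C : Matrix (Fin n) (Fin n) ℂ)⁻¹ = ν B • (B : Matrix (Fin n) (Fin n) ℂ) :=
      (hspec B (hexk B hB)).2
    rw [hνA, one_smul] at hPA
    rw [hνB, one_smul] at hPB
    obtain ⟨c, hc1, hc2⟩ := QuotientGroup.eq.mp hmk
    have hAA : (A : Matrix (Fin n) (Fin n) ℂ) * star (A : Matrix (Fin n) (Fin n) ℂ) = 1 :=
      Matrix.mem_unitaryGroup_iff.mp A.2
    have hc2' : star (A : Matrix (Fin n) (Fin n) ℂ) * (B : Matrix (Fin n) (Fin n) ℂ)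
        = c • (1 : Matrix (Fin n) (Fin n) ℂ) := hc2
    have hBA : (B : Matrix (Fin n) (Fin n) ℂ) = c • (A : Matrix (Fin n) (Fin n) ℂ) := by
      have h := congrArg (fun M => (A : Matrix (Fin n) (Fin n) ℂ) * M) hc2'
      simp only [← mul_assoc, hAA, one_mul, mul_smul_comm, mul_one] at h
      exact h
    have hstar : star c = c := by
      apply huniq A
      have e1 : (B : Matrix (Fin n) (Fin n) ℂ).map (starRingEnd ℂ)
          = star c • (A : Matrix (Fin n) (Fin n) ℂ).map (starRingEnd ℂ) := by
        rw [hBA, map_conj_smul]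
      have e2 := hPB
      rw [e1, mul_smul_comm, smul_mul_assoc, hPA, hBA] at e2
      exact e2
    have hcc : c * c = 1 := by
      nth_rewrite 2 [← hstar]
      exact mul_star_self_of_norm_one hc1
    rcases mul_self_eq_one_iff.mp hcc with h1 | h1
    · left
      apply Subtype.ext
      rw [hBA, h1, one_smul]
    · right
      rw [hBA, h1, neg_smul, one_smul, neg_neg]
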